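/- The stabilizing feedback ν_s is continuous on ℝ^p, locally Lipschitz continuous on ℝ^p \ {0}, and satisfies ‖ν_s(ξ)‖ = 1 for every ξ ∈ ℝ^p with ‖ξ‖ ≥ c. -/

import Mathlib

open scoped RealInnerProductSpace
open Classical

noncomputable def sc (c r : ℝ) : ℝ :=
  if r ≤ c then c ^ ((2:ℝ)/3) * r ^ ((1:ℝ)/3) else r

noncomputable def nuS (c : ℝ) {p : ℕ} (ξ : EuclideanSpace ℝ (Fin p)) :
    EuclideanSpace ℝ (Fin p) :=
  if ξ = 0 then 0 else (-(sc c ‖ξ‖)⁻¹) • ξ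

noncomputable def proj {p : ℕ} (z v : EuclideanSpace ℝ (Fin p)) :
    EuclideanSpace ℝ (Fin p) :=
  v - (⟪z, v⟫ / ‖z‖ ^ 2) • z

noncomputable def nuA (c : ℝ) {p : ℕ} (q ξ : EuclideanSpace ℝ (Fin p)) :
    EuclideanSpace ℝ (Fin p) :=
  proj (ξ - q) (nuS c ξ)

noncomputable def sigmaQ {p : ℕ} (q ξ : EuclideanSpace ℝ (Fin p)) : ℝ :=
  max 0 (min (⟪ξ, ξ - q⟫ + 1) 1)

noncomputable def alphaS {p : ℕ} (q : EuclideanSpace ℝ (Fin p)) (Δ lam : ℝ)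
    (ξ : EuclideanSpace ℝ (Fin p)) : ℝ :=
  max 0 (min ((‖ξ - q‖ - Δ * sigmaQ q ξ) / (lam - Δ)) 1)

noncomputable def alphaA {p : ℕ} (q : EuclideanSpace ℝ (Fin p)) (Δ lam : ℝ)
    (ξ : EuclideanSpace ℝ (Fin p)) : ℝ :=
  sigmaQ q ξ * (1 - alphaS q Δ lam ξ)

noncomputable def mu (c : ℝ) {p : ℕ} (q : EuclideanSpace ℝ (Fin p)) (Δ lam : ℝ)
    (ξ : EuclideanSpace ℝ (Fin p)) : EuclideanSpace ℝ (Fin p) :=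
  alphaS q Δ lam ξ • nuS c ξ + alphaA q Δ lam ξ • nuA c q ξ

lemma rpow_split {r : ℝ} (hr : 0 ≤ r) : r ^ ((2:ℝ)/3) * r ^ ((1:ℝ)/3) = r := by
  rw [← Real.rpow_add' hr (by norm_num)]; norm_num

lemma sc_pos {c r : ℝ} (hc : 0 < c) (hr : 0 < r) : 0 < sc c r := by
  unfold sc; split
  · positivity
  · exact hr

lemma sc_eq_of_ge {c r : ℝ} (hc : 0 < c) (hr : c ≤ r) : sc c r = r := by
  unfold sc; split
  · have h : r = c := le_antisymm ‹_› hr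
    subst h; exact rpow_split hc.le
  · rfl

lemma norm_nuS {c : ℝ} {p : ℕ} (hc : 0 < c) {x : EuclideanSpace ℝ (Fin p)} (hx : x ≠ 0) :
    ‖nuS c x‖ = (sc c ‖x‖)⁻¹ * ‖x‖ := by
  have hxn : 0 < ‖x‖ := norm_pos_iff.2 hx
  rw [nuS, if_neg hx, norm_smul, Real.norm_eq_abs, abs_neg,
    abs_of_nonneg (inv_nonneg.2 (sc_pos hc hxn).le)]

lemma nuS_norm_one {c : ℝ} {p : ℕ} (hc : 0 < c) {x : EuclideanSpace ℝ (Fin p)}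
    (hx : c ≤ ‖x‖) : ‖nuS c x‖ = 1 := by
  have hxn : 0 < ‖x‖ := lt_of_lt_of_le hc hx
  rw [norm_nuS hc (norm_pos_iff.1 hxn), sc_eq_of_ge hc hx, inv_mul_cancel₀ hxn.ne']

lemma nuS_cont_at_zero {c : ℝ} {p : ℕ} (hc : 0 < c) :
    ContinuousAt (fun x : EuclideanSpace ℝ (Fin p) => nuS c x) 0 := by
  rw [ContinuousAt]
  have h0 : nuS c (0 : EuclideanSpace ℝ (Fin p)) = 0 := by rw [nuS, if_pos rfl]
  rw [h0, tendsto_zero_iff_norm_tendsto_zero]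
  apply squeeze_zero' (Filter.Eventually.of_forall fun _ => norm_nonneg _)
    (g := fun x => (c ^ ((2:ℝ)/3))⁻¹ * ‖x‖ ^ ((2:ℝ)/3))
  · filter_upwards [Metric.ball_mem_nhds (0 : EuclideanSpace ℝ (Fin p)) hc] with x hx
    rcases eq_or_ne x 0 with rfl | hx0
    · rw [nuS, if_pos rfl, norm_zero]; positivity
    · have hxn : 0 < ‖x‖ := norm_pos_iff.2 hx0
      have hxc : ‖x‖ ≤ c := by
        have := mem_ball_zero_iff.1 hx; linarith
      rw [norm_nuS hc hx0, sc, if_pos hxc, mul_inv, mul_assoc]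
      apply le_of_eq
      congr 1
      calc (‖x‖ ^ ((1:ℝ)/3))⁻¹ * ‖x‖
          = ‖x‖ ^ (-((1:ℝ)/3)) * ‖x‖ ^ (1:ℝ) := by
            rw [Real.rpow_neg hxn.le, Real.rpow_one]
      _ = ‖x‖ ^ ((2:ℝ)/3) := by rw [← Real.rpow_add hxn]; norm_num
  · have : Filter.Tendsto (fun x : EuclideanSpace ℝ (Fin p) => ‖x‖ ^ ((2:ℝ)/3))
        (nhds 0) (nhds 0) := by
      have h1 : Filter.Tendsto (fun x : EuclideanSpace ℝ (Fin p) => ‖x‖)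
          (nhds 0) (nhds 0) := by simpa using continuous_norm.tendsto (0 : EuclideanSpace ℝ (Fin p))
      have h2 : ContinuousAt (fun r : ℝ => r ^ ((2:ℝ)/3)) 0 :=
        Real.continuousAt_rpow_const 0 _ (Or.inr (by norm_num))
      have := h2.tendsto.comp h1
      simpa [Function.comp_def, Real.zero_rpow (by norm_num : ((2:ℝ)/3) ≠ 0)] using this
    simpa using this.const_mul (c ^ ((2:ℝ)/3))⁻¹

lemma inv_sc_eq_min {c r : ℝ} (hc : 0 < c) (hr : 0 < r) :
    (sc c r)⁻¹ = min r⁻¹ (c ^ ((2:ℝ)/3) * r ^ ((1:ℝ)/3))⁻¹ := by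
  unfold sc; split
  · rename_i h
    rw [min_eq_right]
    apply inv_anti₀ hr
    calc r = r ^ ((2:ℝ)/3) * r ^ ((1:ℝ)/3) := (rpow_split hr.le).symm
    _ ≤ c ^ ((2:ℝ)/3) * r ^ ((1:ℝ)/3) := by
        apply mul_le_mul_of_nonneg_right (Real.rpow_le_rpow hr.le h (by norm_num))
        positivity
  · rename_i h
    push_neg at h
    rw [min_eq_left]
    apply inv_anti₀ (by positivity)
    calc c ^ ((2:ℝ)/3) * r ^ ((1:ℝ)/3) ≤ r ^ ((2:ℝ)/3) * r ^ ((1:ℝ)/3) := by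
          apply mul_le_mul_of_nonneg_right (Real.rpow_le_rpow hc.le h.le (by norm_num))
          positivity
    _ = r := rpow_split hr.le

lemma nuS_lip (p : ℕ) (c : ℝ) (hc : 0 < c) (ξ : EuclideanSpace ℝ (Fin p)) (hξ : ξ ≠ 0) :
    ∃ K : NNReal, ∃ t ∈ nhds ξ, LipschitzOnWith K (fun ξ' => nuS c ξ') t := by
  set m : ℝ := ‖ξ‖ / 2 with hm
  have hξn : 0 < ‖ξ‖ := norm_pos_iff.2 hξ
  have hm0 : 0 < m := by positivity
  set f₁ : EuclideanSpace ℝ (Fin p) → ℝ := fun x => ‖x‖⁻¹ with hf₁def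
  set f₂ : EuclideanSpace ℝ (Fin p) → ℝ :=
    fun x => (c ^ ((2:ℝ)/3) * ‖x‖ ^ ((1:ℝ)/3))⁻¹ with hf₂def
  have hnorm : ContDiffAt ℝ 1 (fun x : EuclideanSpace ℝ (Fin p) => ‖x‖) ξ :=
    contDiffAt_id.norm ℝ hξ
  have hf₁ : ContDiffAt ℝ 1 f₁ ξ := hnorm.inv hξn.ne'
  have hf₂ : ContDiffAt ℝ 1 f₂ ξ := by
    apply ContDiffAt.inv
    · exact contDiffAt_const.mul (hnorm.rpow_const_of_ne hξn.ne')
    · positivity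
  obtain ⟨K₁, t₁, ht₁, hl₁⟩ := hf₁.exists_lipschitzOnWith
  obtain ⟨K₂, t₂, ht₂, hl₂⟩ := hf₂.exists_lipschitzOnWith
  set t := t₁ ∩ t₂ ∩ Metric.ball ξ m with ht
  have htn : t ∈ nhds ξ :=
    Filter.inter_mem (Filter.inter_mem ht₁ ht₂) (Metric.ball_mem_nhds ξ hm0)
  have hball : ∀ x ∈ t, m ≤ ‖x‖ ∧ ‖x‖ ≤ ‖ξ‖ + m := by
    intro x hx
    have hd : dist x ξ < m := hx.2
    constructor
    · have := norm_sub_norm_le ξ x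
      rw [dist_comm, dist_eq_norm] at hd
      have : ‖ξ‖ - ‖x‖ < m := lt_of_le_of_lt (norm_sub_norm_le ξ x) hd
      linarith [show ‖ξ‖ = 2 * m by rw [hm]; ring]
    · have := norm_le_norm_add_norm_sub' x ξ
      rw [dist_eq_norm] at hd
      have : ‖x‖ - ‖ξ‖ ≤ ‖x - ξ‖ := by
        have := norm_sub_norm_le x ξ
        linarith
      linarith
  set K : ℝ := m⁻¹ + ((K₁ ⊔ K₂ : NNReal) : ℝ) * (‖ξ‖ + m) with hK
  have hK0 : 0 ≤ K := by positivity
  refine ⟨K.toNNReal, t, htn, LipschitzOnWith.of_dist_le_mul ?_⟩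
  intro x hx y hy
  have hxm := hball x hx
  have hym := hball y hy
  have hx0 : x ≠ 0 := by
    intro h; rw [h, norm_zero] at hxm; linarith [hxm.1]
  have hy0 : y ≠ 0 := by
    intro h; rw [h, norm_zero] at hym; linarith [hym.1]
  have hxn : 0 < ‖x‖ := lt_of_lt_of_le hm0 hxm.1
  have hyn : 0 < ‖y‖ := lt_of_lt_of_le hm0 hym.1
  -- nuS values
  have hvx : nuS c x = -((min (f₁ x) (f₂ x)) • x) := by
    rw [nuS, if_neg hx0, inv_sc_eq_min hc hxn, neg_smul]
  have hvy : nuS c y = -((min (f₁ y) (f₂ y)) • y) := by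
    rw [nuS, if_neg hy0, inv_sc_eq_min hc hyn, neg_smul]
  set hx' : ℝ := min (f₁ x) (f₂ x) with hhx
  set hy' : ℝ := min (f₁ y) (f₂ y) with hhy
  have hhx0 : 0 ≤ hx' := le_min (by positivity) (by positivity)
  have hhxle : hx' ≤ m⁻¹ := by
    refine (min_le_left _ _).trans ?_
    exact inv_anti₀ hm0 hxm.1
  have hmin : |hx' - hy'| ≤ ((K₁ ⊔ K₂ : NNReal) : ℝ) * dist x y := by
    refine (abs_min_sub_min_le_max _ _ _ _).trans (max_le ?_ ?_)
    · calc |f₁ x - f₁ y| = dist (f₁ x) (f₁ y) := (Real.dist_eq _ _).symm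
      _ ≤ K₁ * dist x y := hl₁.dist_le_mul x hx.1.1 y hy.1.1
      _ ≤ ((K₁ ⊔ K₂ : NNReal) : ℝ) * dist x y := by
          gcongr; exact_mod_cast le_max_left K₁ K₂
    · calc |f₂ x - f₂ y| = dist (f₂ x) (f₂ y) := (Real.dist_eq _ _).symm
      _ ≤ K₂ * dist x y := hl₂.dist_le_mul x hx.1.2 y hy.1.2
      _ ≤ ((K₁ ⊔ K₂ : NNReal) : ℝ) * dist x y := by
          gcongr; exact_mod_cast le_max_right K₁ K₂
  rw [dist_eq_norm, hvx, hvy]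
  have heq : -(hx' • x) - -(hy' • y) = -(hx' • (x - y) + (hx' - hy') • y) := by
    simp [smul_sub, sub_smul]; abel
  rw [heq, norm_neg]
  calc ‖hx' • (x - y) + (hx' - hy') • y‖
      ≤ ‖hx' • (x - y)‖ + ‖(hx' - hy') • y‖ := norm_add_le _ _
  _ = |hx'| * ‖x - y‖ + |hx' - hy'| * ‖y‖ := by rw [norm_smul, norm_smul, Real.norm_eq_abs, Real.norm_eq_abs]
  _ ≤ m⁻¹ * ‖x - y‖ + (((K₁ ⊔ K₂ : NNReal) : ℝ) * dist x y) * (‖ξ‖ + m) := by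
      gcongr
      · rw [abs_of_nonneg hhx0]; exact hhxle
      · exact hym.2
  _ = (m⁻¹ + ((K₁ ⊔ K₂ : NNReal) : ℝ) * (‖ξ‖ + m)) * dist x y := by
      rw [dist_eq_norm]; ring
  _ = K.toNNReal * dist x y := by rw [Real.coe_toNNReal _ hK0]

theorem stmt0 (p : ℕ) (hp : 1 ≤ p) (c : ℝ) (hc : 0 < c) :
    Continuous (fun ξ : EuclideanSpace ℝ (Fin p) => nuS c ξ) ∧
    (∀ ξ : EuclideanSpace ℝ (Fin p), ξ ≠ 0 →
      ∃ K : NNReal, ∃ t ∈ nhds ξ, LipschitzOnWith K (fun ξ' => nuS c ξ') t) ∧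
    (∀ ξ : EuclideanSpace ℝ (Fin p), c ≤ ‖ξ‖ → ‖nuS c ξ‖ = 1) := by
  refine ⟨?_, fun ξ hξ => nuS_lip p c hc ξ hξ, fun ξ hξ => nuS_norm_one hc hξ⟩
  rw [continuous_iff_continuousAt]
  intro x
  rcases eq_or_ne x 0 with rfl | hx
  · exact nuS_cont_at_zero hc
  · obtain ⟨K, t, ht, hl⟩ := nuS_lip p c hc x hx
    exact hl.continuousOn.continuousAt ht
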